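/- Let X be a reflexive Banach space, k = l + m, P a cut of {1,...,k} of size l, and Ū = (U₁,...,U_k) free ultrafilters. Let s and t be normalized trees in X of heights l and m which are Ū_P-weakly null and Ū_{P^c}-weakly null respectively, and let u = s ⊛_P t be their P-intertwining. Then for all (a_i) ∈ ℝ^k: N_u^Ū(Σ_{i∈P} a_i e_i) ≤ N_u^Ū(Σ_{i=1}^k a_i e_i) and N_u^Ū(Σ_{i∈P^c} a_i e_i) ≤ N_u^Ū(Σ_{i=1}^k a_i e_i). -/

import Mathlib

open Filter Topology
open scoped ZeroAtInfty ENNReal NNReal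

/-- Increasing `k`-tuples of naturals: the vertices `[ℕ]^k` of the interlacing graph. -/
def IncTuple (k : ℕ) := {f : Fin k → ℕ // StrictMono f}

/-- `m₁ ≤ n₁ ≤ m₂ ≤ n₂ ≤ ⋯ ≤ m_k ≤ n_k`. -/
def InterLE {k : ℕ} (m n : Fin k → ℕ) : Prop :=
  (∀ i, m i ≤ n i) ∧ ∀ (i : ℕ) (h : i + 1 < k), n ⟨i, Nat.lt_of_succ_lt h⟩ ≤ m ⟨i + 1, h⟩

/-- The pair `(m, n)` interlaces. -/
def Interlacing {k : ℕ} (m n : Fin k → ℕ) : Prop := InterLE m n ∨ InterLE n m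

/-- `m₁ ≤ n₁ < m₂ ≤ n₂ < ⋯ < m_k ≤ n_k`. -/
def StrongInterLE {k : ℕ} (m n : Fin k → ℕ) : Prop :=
  (∀ i, m i ≤ n i) ∧ ∀ (i : ℕ) (h : i + 1 < k), n ⟨i, Nat.lt_of_succ_lt h⟩ < m ⟨i + 1, h⟩

/-- The pair `(m, n)` is strongly interlacing. -/
def StronglyInterlacing {k : ℕ} (m n : Fin k → ℕ) : Prop :=
  StrongInterLE m n ∨ StrongInterLE n m

/-- The interlacing graph on `[ℕ]^k`. -/
def interGraph (k : ℕ) : SimpleGraph (IncTuple k) where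
  Adj m n := m ≠ n ∧ Interlacing m.1 n.1
  symm := ⟨fun _ _ h => ⟨h.1.symm, h.2.symm⟩⟩
  loopless := ⟨fun _ h => h.1 rfl⟩

/-- The interlacing graph metric `d_I`. -/
noncomputable def dI {k : ℕ} (m n : IncTuple k) : ℕ := (interGraph k).dist m n

/-- All entries of the tuple belong to `L`. -/
def memAll {k : ℕ} (L : Set ℕ) (m : IncTuple k) : Prop := ∀ i, m.1 i ∈ L

/-- `m̄ < n̄`: every entry of `m` is below every entry of `n`. -/
def ordLT {k : ℕ} (m n : IncTuple k) : Prop := ∀ i j, m.1 i < n.1 j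

/-- Kalton's `Q(ε, δ)`-property of a metric space. -/
def HasQProp (M : Type*) [MetricSpace M] (ε δ : ℝ) : Prop :=
  ∀ (k : ℕ) (f : IncTuple k → M),
    (∀ m n : IncTuple k, dist (f m) (f n) ≤ δ * dI m n) →
    ∃ L : Set ℕ, L.Infinite ∧ ∀ m n : IncTuple k, memAll L m → memAll L n → ordLT m n →
      dist (f m) (f n) < ε

/-- The modulus `Δ_M(ε)`. -/
noncomputable def DeltaMod (M : Type*) [MetricSpace M] (ε : ℝ) : ℝ :=
  sSup {δ : ℝ | 0 ≤ δ ∧ HasQProp M ε δ}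

/-- The constant `q_M`. -/
noncomputable def qMod (M : Type*) [MetricSpace M] : ℝ :=
  sSup {c : ℝ | 0 ≤ c ∧ ∀ ε : ℝ, 0 < ε → c * ε ≤ DeltaMod M ε}

/-- Boundedness of a map into a metric space. -/
def IsBddMap {α : Type*} {M : Type*} [MetricSpace M] (f : α → M) : Prop :=
  ∃ R : ℝ, ∀ x y, dist (f x) (f y) ≤ R

/-- Property `Q` with constant `C`: every Lipschitz map on an interlacing graph
concentrates on `[L]^k` up to `C·Lip(f)`. -/
def HasPropQConst (M : Type*) [MetricSpace M] (C : ℝ) : Prop :=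
  ∀ (k : ℕ) (f : IncTuple k → M) (K : ℝ), 0 ≤ K →
    (∀ m n : IncTuple k, dist (f m) (f n) ≤ K * dI m n) →
    ∃ L : Set ℕ, L.Infinite ∧ ∀ m n : IncTuple k, memAll L m → memAll L n →
      dist (f m) (f n) ≤ C * K

/-- Property `Q`. -/
def HasPropQ (M : Type*) [MetricSpace M] : Prop := ∃ C : ℝ, 0 ≤ C ∧ HasPropQConst M C

/-- The property `Q` constant `Q_M`. -/
noncomputable def QConst (M : Type*) [MetricSpace M] : ℝ :=
  sInf {C : ℝ | 0 ≤ C ∧ HasPropQConst M C}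

theorem compl_card {l m : ℕ} (P : Finset (Fin (l + m))) (hP : P.card = l) : Pᶜ.card = m := by
  rw [Finset.card_compl, hP, Fintype.card_fin]; omega

/-- The increasing subtuple `(n_i : i ∈ P)`. -/
def subTuple {k j : ℕ} (n : Fin k → ℕ) (P : Finset (Fin k)) (h : P.card = j) :
    Fin j → ℕ := fun i => n (P.orderEmbOfFin h i)

/-- The set of distances `d_M(f(n_i : i ∈ P), g(n_i : i ∈ P^c))` over `n̄ ∈ [L]^{l+m}`. -/
def cutDistSet {l m : ℕ} {M : Type*} [MetricSpace M]
    (f : (Fin l → ℕ) → M) (g : (Fin m → ℕ) → M) (L : Set ℕ)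
    (P : Finset (Fin (l + m))) (hP : P.card = l) : Set ℝ :=
  {d : ℝ | ∃ n : Fin (l + m) → ℕ, StrictMono n ∧ (∀ i, n i ∈ L) ∧
    d = dist (f (subTuple n P hP)) (g (subTuple n Pᶜ (compl_card P hP)))}

/-- `C`-cut stability. -/
def CutStableWith (M : Type*) [MetricSpace M] (C : ℝ) : Prop :=
  ∀ (l m : ℕ) (f : (Fin l → ℕ) → M) (g : (Fin m → ℕ) → M),
    IsBddMap f → IsBddMap g → ∀ L : Set ℕ, L.Infinite →
    ∀ (P Q : Finset (Fin (l + m))) (hP : P.card = l) (hQ : Q.card = l),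
      sInf (cutDistSet f g L P hP) ≤ C * sSup (cutDistSet f g L Q hQ)

/-- A permutation of `{1,…,l+m}` preserving the order on `{1,…,l}` and on `{l+1,…,l+m}`. -/
def OrderPreservingPerm {l m : ℕ} (π : Equiv.Perm (Fin (l + m))) : Prop :=
  StrictMono (fun i : Fin l => π (Fin.castAdd m i)) ∧
  StrictMono (fun j : Fin m => π (Fin.natAdd l j))

/-- Distances `d_M(f(n_{π(1)},…,n_{π(l)}), g(n_{π(l+1)},…,n_{π(l+m)}))` over `n̄ ∈ [L]^{l+m}`. -/
def permDistSet {l m : ℕ} {M : Type*} [MetricSpace M]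
    (f : (Fin l → ℕ) → M) (g : (Fin m → ℕ) → M) (L : Set ℕ)
    (π : Equiv.Perm (Fin (l + m))) : Set ℝ :=
  {d : ℝ | ∃ n : Fin (l + m) → ℕ, StrictMono n ∧ (∀ i, n i ∈ L) ∧
    d = dist (f (fun i => n (π (Fin.castAdd m i)))) (g (fun j => n (π (Fin.natAdd l j))))}

/-- `C`-upper stability. -/
def UpperStableWith (M : Type*) [MetricSpace M] (C : ℝ) : Prop :=
  ∀ (l m : ℕ) (f : (Fin l → ℕ) → M) (g : (Fin m → ℕ) → M),
    IsBddMap f → IsBddMap g → ∀ L : Set ℕ, L.Infinite →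
    ∀ π : Equiv.Perm (Fin (l + m)), OrderPreservingPerm π →
      sInf (permDistSet f g L (Equiv.refl _)) ≤ C * sSup (permDistSet f g L π)

/-- The modulus of continuity `ω_h`. -/
noncomputable def omegaMod {M N : Type*} [MetricSpace M] [MetricSpace N] (h : M → N)
    (t : ℝ) : ℝ≥0∞ :=
  ⨆ p : {p : M × M // dist p.1 p.2 ≤ t}, edist (h p.1.1) (h p.1.2)

/-- The compression modulus `ρ_h`. -/
noncomputable def rhoMod {M N : Type*} [MetricSpace M] [MetricSpace N] (h : M → N)
    (t : ℝ) : ℝ≥0∞ :=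
  ⨅ p : {p : M × M // t ≤ dist p.1 p.2}, edist (h p.1.1) (h p.1.2)

/-- A coarse embedding, expressed via the moduli. -/
def CoarseEmbMod {M N : Type*} [MetricSpace M] [MetricSpace N] (h : M → N) : Prop :=
  (∀ t : ℝ, omegaMod h t < ⊤) ∧ Tendsto (rhoMod h) atTop (𝓝 ⊤)

/-- A uniform embedding, expressed via the moduli. -/
def UniformEmbMod {M N : Type*} [MetricSpace M] [MetricSpace N] (h : M → N) : Prop :=
  Tendsto (omegaMod h) (𝓝[>] (0 : ℝ)) (𝓝 0) ∧ ∀ t : ℝ, 0 < t → 0 < rhoMod h t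

/-- A free ultrafilter on `ℕ`. -/
def FreeUF (U : Ultrafilter ℕ) : Prop := (U : Filter ℕ) ≤ Filter.cofinite

/-- The iterated ultrafilter limit `lim_{n₁,U₁} ⋯ lim_{n_k,U_k} F(n₁,…,n_k)`. -/
noncomputable def ultraLim : (k : ℕ) → (Fin k → Ultrafilter ℕ) → ((Fin k → ℕ) → ℝ) → ℝ
  | 0, _, F => F (fun i => i.elim0)
  | k + 1, U, F => ultraLim k (fun i => U i.castSucc)
      (fun n => limUnder (U (Fin.last k)) (fun j => F (Fin.snoc n j)))

/-- An unrooted (countably branching) tree of height `k` in `X`. -/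
def TreeU (X : Type*) (k : ℕ) := (i : Fin k) → (Fin (i.1 + 1) → ℕ) → X

/-- A rooted (countably branching) tree of height `k` in `X`. -/
def TreeR (X : Type*) (k : ℕ) := (i : Fin (k + 1)) → (Fin i.1 → ℕ) → X

/-- A normalized unrooted tree takes values in the unit sphere. -/
def NormalizedU {X : Type*} [NormedAddCommGroup X] {k : ℕ} (t : TreeU X k) : Prop :=
  ∀ i v, ‖t i v‖ = 1

/-- A normalized rooted tree takes values in the unit sphere. -/
def NormalizedR {X : Type*} [NormedAddCommGroup X] {k : ℕ} (t : TreeR X k) : Prop :=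
  ∀ i v, ‖t i v‖ = 1

/-- `∀_{U₁} n₁ ⋯ ∀_{U_j} n_j, P(n₁,…,n_j)`. -/
def iterEventually : (j : ℕ) → (Fin j → Ultrafilter ℕ) → ((Fin j → ℕ) → Prop) → Prop
  | 0, _, P => P (fun i => i.elim0)
  | j + 1, U, P => iterEventually j (fun i => U i.castSucc)
      (fun n => ∀ᶠ a in U (Fin.last j), P (Fin.snoc n a))

/-- An unrooted tree is `Ū`-weakly null. -/
def WeaklyNullU {X : Type*} [NormedAddCommGroup X] [NormedSpace ℝ X] {k : ℕ}
    (U : Fin k → Ultrafilter ℕ) (t : TreeU X k) : Prop :=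
  ∀ i : Fin k, iterEventually i.1 (fun j => U (Fin.castLE i.isLt.le j))
    (fun pre => ∀ φ : X →L[ℝ] ℝ,
      Tendsto (fun a : ℕ => φ (t i (Fin.snoc pre a))) (U i) (𝓝 0))

/-- A rooted tree is `Ū`-weakly null. -/
def WeaklyNullR {X : Type*} [NormedAddCommGroup X] [NormedSpace ℝ X] {k : ℕ}
    (U : Fin k → Ultrafilter ℕ) (t : TreeR X k) : Prop :=
  ∀ i : Fin k, iterEventually i.1 (fun j => U (Fin.castLE i.isLt.le j))
    (fun pre => ∀ φ : X →L[ℝ] ℝ,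
      Tendsto (fun a : ℕ => φ (t i.succ (Fin.snoc pre a))) (U i) (𝓝 0))

/-- The norm `N_t^{Ū}(x ⊕ Σ aᵢ eᵢ)`. -/
noncomputable def treeNorm {X : Type*} [NormedAddCommGroup X] [NormedSpace ℝ X] {k : ℕ}
    (U : Fin k → Ultrafilter ℕ) (t : TreeU X k) (x : X) (a : Fin k → ℝ) : ℝ :=
  ultraLim k U (fun n => ‖x + ∑ i : Fin k, a i • t i (fun j => n (Fin.castLE i.isLt j))‖)

/-- The number of elements of `P` that are `≤ j`. -/
def rankIn {k : ℕ} (P : Finset (Fin k)) (j : Fin k) : ℕ :=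
  (P.filter (fun i => i ≤ j)).card

/-- The `P`-intertwining `s ⊛_P t` of two trees. -/
def intertwine {X : Type*} {l m : ℕ} (P : Finset (Fin (l + m))) (hP : P.card = l)
    (s : TreeU X l) (t : TreeU X m) : TreeU X (l + m) := fun j v =>
  let v' : Fin (l + m) → ℕ := fun p => if h : p.1 < j.1 + 1 then v ⟨p.1, h⟩ else 0
  if hj : j ∈ P then
    s ⟨rankIn P j - 1, by
        have h1 : 0 < rankIn P j :=
          Finset.card_pos.mpr ⟨j, Finset.mem_filter.mpr ⟨hj, le_refl j⟩⟩
        have h2 : rankIn P j ≤ l := (Finset.card_filter_le P _).trans hP.le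
        omega⟩
      (fun b => v' (P.orderEmbOfFin hP ⟨b.1, by
        have h1 : 0 < rankIn P j :=
          Finset.card_pos.mpr ⟨j, Finset.mem_filter.mpr ⟨hj, le_refl j⟩⟩
        have h2 : rankIn P j ≤ l := (Finset.card_filter_le P _).trans hP.le
        have h3 := b.isLt
        omega⟩))
  else
    t ⟨rankIn Pᶜ j - 1, by
        have h1 : 0 < rankIn Pᶜ j :=
          Finset.card_pos.mpr ⟨j, Finset.mem_filter.mpr ⟨Finset.mem_compl.mpr hj, le_refl j⟩⟩
        have h2 : rankIn Pᶜ j ≤ m := (Finset.card_filter_le Pᶜ _).trans (compl_card P hP).le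
        omega⟩
      (fun b => v' (Pᶜ.orderEmbOfFin (compl_card P hP) ⟨b.1, by
        have h1 : 0 < rankIn Pᶜ j :=
          Finset.card_pos.mpr ⟨j, Finset.mem_filter.mpr ⟨Finset.mem_compl.mpr hj, le_refl j⟩⟩
        have h2 : rankIn Pᶜ j ≤ m := (Finset.card_filter_le Pᶜ _).trans (compl_card P hP).le
        have h3 := b.isLt
        omega⟩))

/-- The unrooted part of a rooted tree. -/
def unroot {X : Type*} {k : ℕ} (t : TreeR X k) : TreeU X k := fun i v => t i.succ v

/-- The summing basis of `c₀`. -/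
noncomputable def summingBasis (n : ℕ) : C₀(ℕ, ℝ) :=
  ⟨⟨fun x => if x ≤ n then 1 else 0, continuous_of_discreteTopology⟩, by
    rw [cocompact_eq_cofinite, Nat.cofinite_eq_atTop]
    refine (tendsto_congr' ?_).mpr tendsto_const_nhds
    filter_upwards [eventually_gt_atTop n] with x hx
    simp [if_neg (not_le.mpr hx)]⟩

/-- The canonical map `[ℕ]^k → c₀`, `n̄ ↦ Σᵢ s_{nᵢ}`. -/
noncomputable def interMap {k : ℕ} (m : Fin k → ℕ) : C₀(ℕ, ℝ) :=
  ∑ i : Fin k, summingBasis (m i)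

/-- Krivine–Maurey stability of a metric space. -/
def StableSpace (M : Type*) [MetricSpace M] : Prop :=
  ∀ U V : Ultrafilter ℕ, FreeUF U → FreeUF V →
    ∀ x y : ℕ → M, Bornology.IsBounded (Set.range x) → Bornology.IsBounded (Set.range y) →
      limUnder (U : Filter ℕ) (fun a => limUnder (V : Filter ℕ) (fun b => dist (x a) (y b)))
        = limUnder (V : Filter ℕ) (fun b => limUnder (U : Filter ℕ) (fun a => dist (x a) (y b)))

section Helpers

lemma bddTendsto {U : Ultrafilter ℕ} {f : ℕ → ℝ} {R : ℝ} (h : ∀ n, |f n| ≤ R) :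
    Tendsto f (U : Filter ℕ) (𝓝 (limUnder (U : Filter ℕ) f)) := by
  obtain ⟨a, -, ha⟩ := (isCompact_Icc (a := -R) (b := R)).ultrafilter_le_nhds
    (Ultrafilter.map f U) (by
      rw [Ultrafilter.coe_map, le_principal_iff, mem_map]
      exact univ_mem' fun n => abs_le.1 (h n))
  rw [Ultrafilter.coe_map] at ha
  have ht : Tendsto f (U : Filter ℕ) (𝓝 a) := ha
  rw [ht.limUnder_eq]; exact ht

lemma limUnder_abs_le {U : Ultrafilter ℕ} {f : ℕ → ℝ} {R : ℝ} (h : ∀ n, |f n| ≤ R) :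
    |limUnder (U : Filter ℕ) f| ≤ R := by
  have ht := bddTendsto (U := U) h
  exact abs_le.2 ⟨ge_of_tendsto ht (Eventually.of_forall fun n => (abs_le.1 (h n)).1),
    le_of_tendsto ht (Eventually.of_forall fun n => (abs_le.1 (h n)).2)⟩

lemma limUnder_mono {U : Ultrafilter ℕ} {f g : ℕ → ℝ} {Rf Rg : ℝ} (hf : ∀ n, |f n| ≤ Rf)
    (hg : ∀ n, |g n| ≤ Rg) (h : ∀ᶠ n in (U : Filter ℕ), f n ≤ g n) :
    limUnder (U : Filter ℕ) f ≤ limUnder (U : Filter ℕ) g :=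
  le_of_tendsto_of_tendsto (bddTendsto hf) (bddTendsto hg) h

lemma limUnder_linear {U : Ultrafilter ℕ} {f g : ℕ → ℝ} {Rf Rg : ℝ} (hf : ∀ n, |f n| ≤ Rf)
    (hg : ∀ n, |g n| ≤ Rg) (a b : ℝ) :
    limUnder (U : Filter ℕ) (fun n => a * f n + b * g n)
      = a * limUnder (U : Filter ℕ) f + b * limUnder (U : Filter ℕ) g :=
  (((bddTendsto hf).const_mul a).add ((bddTendsto hg).const_mul b)).limUnder_eq

lemma limUnder_const' {U : Ultrafilter ℕ} (c : ℝ) :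
    limUnder (U : Filter ℕ) (fun _ : ℕ => c) = c :=
  (tendsto_const_nhds).limUnder_eq

lemma snoc_cons_comm {α : Type*} {k : ℕ} (a : α) (n : Fin k → α) (j : α) :
    (Fin.snoc (Fin.cons a n : Fin (k+1) → α) j : Fin (k+2) → α)
      = Fin.cons a (Fin.snoc n j : Fin (k+1) → α) := by
  funext i
  refine Fin.cases ?_ (fun i' => ?_) i
  · rw [show ((0 : Fin (k+2))) = Fin.castSucc 0 from rfl, Fin.snoc_castSucc]
    rfl
  · refine Fin.lastCases ?_ (fun i'' => ?_) i'
    · rw [Fin.cons_succ, Fin.snoc_last, Fin.succ_last, Fin.snoc_last]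
    · rw [Fin.cons_succ, Fin.snoc_castSucc, Fin.succ_castSucc, Fin.snoc_castSucc, Fin.cons_succ]

end Helpers


lemma ultraLim_abs_le : ∀ (k : ℕ) (U : Fin k → Ultrafilter ℕ) (F : (Fin k → ℕ) → ℝ) (R : ℝ),
    (∀ n, |F n| ≤ R) → |ultraLim k U F| ≤ R
  | 0, _, _, _, h => h _
  | k + 1, U, F, R, h =>
    ultraLim_abs_le k _ _ R (fun n => limUnder_abs_le (fun j => h _))

lemma ultraLim_mono : ∀ (k : ℕ) (U : Fin k → Ultrafilter ℕ) (F G : (Fin k → ℕ) → ℝ)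
    (RF RG : ℝ), (∀ n, |F n| ≤ RF) → (∀ n, |G n| ≤ RG) → (∀ n, F n ≤ G n) →
    ultraLim k U F ≤ ultraLim k U G
  | 0, _, _, _, _, _, _, _, h => h _
  | k + 1, U, F, G, RF, RG, hF, hG, h =>
    ultraLim_mono k _ _ _ RF RG (fun n => limUnder_abs_le (fun j => hF _))
      (fun n => limUnder_abs_le (fun j => hG _))
      (fun n => limUnder_mono (fun j => hF _) (fun j => hG _)
        (Eventually.of_forall fun j => h _))

lemma ultraLim_const : ∀ (k : ℕ) (U : Fin k → Ultrafilter ℕ) (c : ℝ),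
    ultraLim k U (fun _ => c) = c
  | 0, _, _ => rfl
  | k + 1, U, c => by
      have : (fun n : Fin k → ℕ => limUnder (U (Fin.last k) : Filter ℕ)
          (fun j => (fun _ : Fin (k+1) → ℕ => c) (Fin.snoc n j))) = fun _ => c := by
        funext n; exact limUnder_const' c
      show ultraLim k _ _ = c
      rw [this, ultraLim_const k]

lemma ultraLim_linear : ∀ (k : ℕ) (U : Fin k → Ultrafilter ℕ) (F G : (Fin k → ℕ) → ℝ)
    (RF RG : ℝ), (∀ n, |F n| ≤ RF) → (∀ n, |G n| ≤ RG) → ∀ (a b : ℝ),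
    ultraLim k U (fun n => a * F n + b * G n) = a * ultraLim k U F + b * ultraLim k U G
  | 0, _, _, _, _, _, _, _, _, _ => rfl
  | k + 1, U, F, G, RF, RG, hF, hG, a, b => by
      show ultraLim k _ _ = _
      have : (fun n : Fin k → ℕ => limUnder (U (Fin.last k) : Filter ℕ)
          (fun j => a * F (Fin.snoc n j) + b * G (Fin.snoc n j)))
          = fun n => a * limUnder (U (Fin.last k) : Filter ℕ) (fun j => F (Fin.snoc n j))
            + b * limUnder (U (Fin.last k) : Filter ℕ) (fun j => G (Fin.snoc n j)) := by
        funext n; exact limUnder_linear (fun j => hF _) (fun j => hG _) a b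
      rw [this, ultraLim_linear k _ _ _ RF RG (fun n => limUnder_abs_le (fun j => hF _))
        (fun n => limUnder_abs_le (fun j => hG _)) a b]
      rfl

lemma ultraLim_cons : ∀ (k : ℕ) (U : Fin (k+1) → Ultrafilter ℕ) (F : (Fin (k+1) → ℕ) → ℝ),
    ultraLim (k+1) U F = limUnder (U 0 : Filter ℕ)
      (fun a => ultraLim k (fun i => U i.succ) (fun n => F (Fin.cons a n)))
  | 0, U, F => by
      show limUnder (U (Fin.last 0) : Filter ℕ) (fun j => F (Fin.snoc (fun i => i.elim0) j))
        = limUnder (U 0 : Filter ℕ) (fun a => F (Fin.cons a (fun i => i.elim0)))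
      have h1 : U (Fin.last 0) = U 0 := rfl
      have h2 : ∀ j : ℕ, (Fin.snoc (fun i : Fin 0 => i.elim0) j : Fin 1 → ℕ)
          = Fin.cons j (fun i : Fin 0 => i.elim0) := by
        intro j; funext i
        have : i = 0 := Fin.ext (Nat.lt_one_iff.mp i.isLt)
        subst this; rfl
      rw [h1]; congr 1; funext j; rw [h2]
  | k + 1, U, F => by
      show ultraLim (k+1) (fun i => U i.castSucc)
        (fun n => limUnder (U (Fin.last (k+1)) : Filter ℕ) (fun j => F (Fin.snoc n j))) = _
      rw [ultraLim_cons k]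
      rw [show Fin.castSucc (0 : Fin (k+1)) = (0 : Fin (k+2)) from rfl]
      congr 1; funext a
      show ultraLim k (fun i => U i.succ.castSucc)
          (fun n => limUnder (U (Fin.last (k+1)) : Filter ℕ)
            (fun j => F (Fin.snoc (Fin.cons a n) j)))
        = ultraLim k (fun i => U i.castSucc.succ)
          (fun n => limUnder (U (Fin.last k).succ : Filter ℕ)
            (fun j => F (Fin.cons a (Fin.snoc n j))))
      have hfam : (fun i : Fin k => U i.succ.castSucc) = fun i : Fin k => U i.castSucc.succ :=
        funext fun i => by rw [Fin.succ_castSucc]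
      have harg : (fun n : Fin k → ℕ => limUnder (U (Fin.last (k+1)) : Filter ℕ)
          (fun j => F (Fin.snoc (Fin.cons a n) j)))
          = fun n : Fin k → ℕ => limUnder (U (Fin.last k).succ : Filter ℕ)
            (fun j => F (Fin.cons a (Fin.snoc n j))) := by
        funext n
        rw [Fin.succ_last]
        congr 1; funext j; rw [snoc_cons_comm]
      rw [hfam, harg]

lemma iterEventually_mono : ∀ (k : ℕ) (U : Fin k → Ultrafilter ℕ)
    (P Q : (Fin k → ℕ) → Prop), (∀ n, P n → Q n) → iterEventually k U P → iterEventually k U Q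
  | 0, _, _, _, h, hP => h _ hP
  | k + 1, U, P, Q, h, hP =>
    iterEventually_mono k _ _ _ (fun n hn => hn.mono fun a ha => h _ ha) hP

lemma iterEventually_of_forall : ∀ (k : ℕ) (U : Fin k → Ultrafilter ℕ)
    (P : (Fin k → ℕ) → Prop), (∀ n, P n) → iterEventually k U P
  | 0, _, _, h => h _
  | k + 1, U, P, h =>
    iterEventually_of_forall k _ _ (fun n => Eventually.of_forall fun a => h _)

lemma iterEventually_cons : ∀ (k : ℕ) (U : Fin (k+1) → Ultrafilter ℕ)
    (P : (Fin (k+1) → ℕ) → Prop), iterEventually (k+1) U P ↔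
      ∀ᶠ a in (U 0 : Filter ℕ), iterEventually k (fun i => U i.succ) (fun n => P (Fin.cons a n))
  | 0, U, P => by
      show (∀ᶠ a in (U (Fin.last 0) : Filter ℕ), P (Fin.snoc (fun i => i.elim0) a)) ↔ _
      have h1 : U (Fin.last 0) = U 0 := rfl
      rw [h1]
      have hfn : ∀ a : ℕ, (Fin.snoc (fun i : Fin 0 => i.elim0) a : Fin 1 → ℕ)
          = Fin.cons a (fun i : Fin 0 => i.elim0) := by
        intro a; funext i
        have : i = 0 := Fin.ext (Nat.lt_one_iff.mp i.isLt)
        subst this; rfl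
      refine eventually_congr (Eventually.of_forall fun a => ?_)
      show P (Fin.snoc (fun i => i.elim0) a) ↔ P (Fin.cons a (fun i => i.elim0))
      rw [hfn a]
  | k + 1, U, P => by
      show iterEventually (k+1) (fun i => U i.castSucc)
        (fun n => ∀ᶠ a in (U (Fin.last (k+1)) : Filter ℕ), P (Fin.snoc n a)) ↔ _
      rw [iterEventually_cons k]
      rw [show Fin.castSucc (0 : Fin (k+1)) = (0 : Fin (k+2)) from rfl]
      apply eventually_congr
      refine Eventually.of_forall fun a => ?_
      show iterEventually k (fun i => U i.succ.castSucc)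
          (fun n => ∀ᶠ b in (U (Fin.last (k+1)) : Filter ℕ), P (Fin.snoc (Fin.cons a n) b))
        ↔ iterEventually k (fun i => U i.castSucc.succ)
          (fun n => ∀ᶠ b in (U (Fin.last k).succ : Filter ℕ), P (Fin.cons a (Fin.snoc n b)))
      have hfam : (fun i : Fin k => U i.succ.castSucc) = fun i : Fin k => U i.castSucc.succ :=
        funext fun i => by rw [Fin.succ_castSucc]
      have harg : (fun n : Fin k → ℕ => ∀ᶠ b in (U (Fin.last (k+1)) : Filter ℕ),
          P (Fin.snoc (Fin.cons a n) b))
          = fun n : Fin k → ℕ => ∀ᶠ b in (U (Fin.last k).succ : Filter ℕ),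
            P (Fin.cons a (Fin.snoc n b)) := by
        funext n
        rw [Fin.succ_last]
        simp only [snoc_cons_comm]
      rw [hfam, harg]

lemma iterEventually_sub : ∀ (q : ℕ) (r : ℕ) (e : Fin r → Fin q) (_ : StrictMono e)
    (U : Fin q → Ultrafilter ℕ) (Q : (Fin r → ℕ) → Prop),
    iterEventually r (fun i => U (e i)) Q →
      iterEventually q U (fun n => Q (fun i => n (e i)))
  | 0, r, e, he, U, Q, h => by
      cases r with
      | zero =>
        show Q (fun i : Fin 0 => (fun j : Fin 0 => (j.elim0 : ℕ)) (e i))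
        have hfn : (fun i : Fin 0 => (fun j : Fin 0 => (j.elim0 : ℕ)) (e i))
            = (fun i : Fin 0 => (i.elim0 : ℕ)) := funext fun i => i.elim0
        rw [hfn]; exact h
      | succ r' => exact absurd (e 0).isLt (by omega)
  | q + 1, r, e, he, U, Q, h => by
      cases r with
      | zero =>
        refine iterEventually_of_forall _ _ _ fun n => ?_
        have hfn : (fun i : Fin 0 => n (e i)) = (fun i : Fin 0 => (i.elim0 : ℕ)) :=
          funext fun i => i.elim0
        rw [hfn]; exact h
      | succ r' =>
        by_cases hlast : e (Fin.last r') = Fin.last q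
        · have hval : ∀ i : Fin r', (e i.castSucc).1 < q := by
            intro i
            have h1 : e i.castSucc < e (Fin.last r') := he (Fin.castSucc_lt_last i)
            rw [hlast] at h1; exact h1
          set e' : Fin r' → Fin q := fun i => ⟨(e i.castSucc).1, hval i⟩ with he'def
          have he' : StrictMono e' := by
            intro i j hij
            simp only [he'def, Fin.mk_lt_mk]
            exact he (Fin.castSucc_lt_castSucc_iff.mpr hij)
          have hh : iterEventually r' (fun i => (fun b : Fin q => U b.castSucc) (e' i))
              (fun n => ∀ᶠ a in (U (Fin.last q) : Filter ℕ), Q (Fin.snoc n a)) := by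
            have hfam : (fun i : Fin r' => U ((e' i).castSucc))
                = fun i : Fin r' => U (e i.castSucc) :=
              funext fun i => congrArg U (Fin.ext rfl)
            show iterEventually r' (fun i : Fin r' => U ((e' i).castSucc)) _
            rw [hfam, ← hlast]
            exact h
          have key := iterEventually_sub q r' e' he' (fun b => U b.castSucc) _ hh
          show iterEventually q (fun b => U b.castSucc)
            (fun n => ∀ᶠ a in (U (Fin.last q) : Filter ℕ), Q (fun i => (Fin.snoc n a : Fin (q+1) → ℕ) (e i)))
          refine iterEventually_mono q _ _ _ (fun n hn => ?_) key
          refine hn.mono fun a ha => ?_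
          have : (fun i : Fin (r'+1) => (Fin.snoc n a : Fin (q+1) → ℕ) (e i))
              = (Fin.snoc (fun i => n (e' i)) a : Fin (r'+1) → ℕ) := by
            funext i
            refine Fin.lastCases ?_ (fun i' => ?_) i
            · rw [hlast, Fin.snoc_last, Fin.snoc_last]
            · rw [Fin.snoc_castSucc]
              have h2 : e i'.castSucc = (e' i').castSucc := Fin.ext rfl
              rw [h2, Fin.snoc_castSucc]
          rw [this]; exact ha
        · have hval : ∀ i : Fin (r'+1), (e i).1 < q := by
            intro i
            have h1 : e i ≤ e (Fin.last r') := he.monotone (Fin.le_last i)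
            have h2 : e (Fin.last r') < Fin.last q :=
              lt_of_le_of_ne (Fin.le_last _) hlast
            exact lt_of_le_of_lt h1 h2
          set e' : Fin (r'+1) → Fin q := fun i => ⟨(e i).1, hval i⟩ with he'def
          have he' : StrictMono e' := by
            intro i j hij
            simp only [he'def, Fin.mk_lt_mk]
            exact he hij
          have hh : iterEventually (r'+1) (fun i => (fun b : Fin q => U b.castSucc) (e' i)) Q := by
            have hfam : (fun i : Fin (r'+1) => U ((e' i).castSucc))
                = fun i : Fin (r'+1) => U (e i) :=
              funext fun i => congrArg U (Fin.ext rfl)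
            show iterEventually (r'+1) (fun i : Fin (r'+1) => U ((e' i).castSucc)) _
            rw [hfam]; exact h
          have key := iterEventually_sub q (r'+1) e' he' (fun b => U b.castSucc) _ hh
          show iterEventually q (fun b => U b.castSucc)
            (fun n => ∀ᶠ a in (U (Fin.last q) : Filter ℕ), Q (fun i => (Fin.snoc n a : Fin (q+1) → ℕ) (e i)))
          refine iterEventually_mono q _ _ _ (fun n hn => ?_) key
          refine Eventually.of_forall fun a => ?_
          have : (fun i : Fin (r'+1) => (Fin.snoc n a : Fin (q+1) → ℕ) (e i))
              = fun i => n (e' i) := by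
            funext i
            have h2 : e i = (e' i).castSucc := Fin.ext rfl
            rw [h2, Fin.snoc_castSucc]
          rw [this]; exact hn

section Norms
variable {X : Type*} [NormedAddCommGroup X] [NormedSpace ℝ X]

lemma mazur {U : Ultrafilter ℕ} (z : ℕ → X)
    (hz : ∀ φ : X →L[ℝ] ℝ, Tendsto (fun n => φ (z n)) (U : Filter ℕ) (𝓝 0))
    (Ψ : X → ℝ) (hconv : ConvexOn ℝ Set.univ Ψ) (K : ℝ) (hK : 0 ≤ K)
    (hlip : ∀ p q : X, Ψ p ≤ Ψ q + K * ‖p - q‖) (c : ℝ)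
    (hc : ∀ᶠ n in (U : Filter ℕ), Ψ (z n) ≤ c) : Ψ 0 ≤ c := by
  set S : Set X := z '' {n | Ψ (z n) ≤ c} with hS
  have h0 : (0 : X) ∈ closure (convexHull ℝ S) := by
    by_contra h0
    obtain ⟨φ, u, hu1, hu2⟩ := geometric_hahn_banach_closed_point
      ((convex_convexHull ℝ S).closure) isClosed_closure h0
    rw [map_zero] at hu2
    have hev : ∀ᶠ n in (U : Filter ℕ), u < φ (z n) := (hz φ).eventually_const_lt hu2
    obtain ⟨n, hn1, hn2⟩ := (hc.and hev).exists
    exact absurd (hu1 _ (subset_closure (subset_convexHull ℝ S ⟨n, hn1, rfl⟩))) (not_lt.2 hn2.le)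
  have hhull : convexHull ℝ S ⊆ {x | Ψ x ≤ c} := by
    apply convexHull_min
    · rintro x ⟨n, hn, rfl⟩; exact hn
    · have := hconv.convex_le c
      simpa using this
  refine le_of_forall_pos_le_add fun ε hε => ?_
  obtain ⟨w, hw1, hw2⟩ := Metric.mem_closure_iff.1 h0 (ε / (K + 1)) (by positivity)
  have h1 : Ψ 0 ≤ Ψ w + K * ‖0 - w‖ := hlip 0 w
  have h2 : Ψ w ≤ c := hhull hw1
  have h3 : ‖0 - w‖ < ε / (K + 1) := by rwa [← dist_eq_norm]
  have h4 : K * ‖0 - w‖ ≤ ε := by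
    calc K * ‖0 - w‖ ≤ K * (ε / (K + 1)) := by
          apply mul_le_mul_of_nonneg_left h3.le hK
      _ ≤ ε := by
          rw [div_eq_inv_mul, ← mul_assoc]
          have : K * (K + 1)⁻¹ ≤ 1 := by
            rw [mul_inv_le_iff₀ (by positivity), one_mul]; linarith
          nlinarith [hε.le]
  linarith

lemma ultraNorm_le_add {k : ℕ} (V : Fin k → Ultrafilter ℕ) (w : (Fin k → ℕ) → X) (R : ℝ)
    (hw : ∀ n, ‖w n‖ ≤ R) (x y : X) :
    ultraLim k V (fun n => ‖x + w n‖) ≤ ultraLim k V (fun n => ‖y + w n‖) + ‖x - y‖ := by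
  have habs : ∀ (v : X), ∀ n, |‖v + w n‖| ≤ ‖v‖ + R := fun v n => by
    rw [abs_of_nonneg (norm_nonneg _)]
    exact (norm_add_le _ _).trans (by linarith [hw n])
  have hmono := ultraLim_mono k V (fun n => ‖x + w n‖) (fun n => ‖y + w n‖ + ‖x - y‖)
    (‖x‖ + R) (‖y‖ + R + ‖x - y‖) (habs x)
    (fun n => by
      have h5 := habs y n
      rw [abs_of_nonneg (norm_nonneg _)] at h5
      rw [abs_of_nonneg (by positivity)]
      show ‖y + w n‖ + ‖x - y‖ ≤ ‖y‖ + R + ‖x - y‖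
      linarith)
    (fun n => by
      calc ‖x + w n‖ = ‖(y + w n) + (x - y)‖ := by
            rw [show (y + w n) + (x - y) = x + w n from by abel]
        _ ≤ ‖y + w n‖ + ‖x - y‖ := norm_add_le _ _)
  have heq : ultraLim k V (fun n => ‖y + w n‖ + ‖x - y‖)
      = ultraLim k V (fun n => ‖y + w n‖) + ‖x - y‖ := by
    have h1 : (fun n : Fin k → ℕ => ‖y + w n‖ + ‖x - y‖)
        = fun n => 1 * ‖y + w n‖ + ‖x - y‖ * 1 := by funext n; ring
    rw [h1, ultraLim_linear k V _ _ (‖y‖ + R) 1 (habs y) (fun n => by norm_num) 1 ‖x - y‖,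
      ultraLim_const, one_mul, mul_one]
  linarith [hmono, heq.le, heq.ge]

lemma ultraNorm_convex {k : ℕ} (V : Fin k → Ultrafilter ℕ) (w : (Fin k → ℕ) → X) (R : ℝ)
    (hw : ∀ n, ‖w n‖ ≤ R) (x y : X) (θ₁ θ₂ : ℝ) (h1 : 0 ≤ θ₁) (h2 : 0 ≤ θ₂)
    (h3 : θ₁ + θ₂ = 1) :
    ultraLim k V (fun n => ‖(θ₁ • x + θ₂ • y) + w n‖)
      ≤ θ₁ * ultraLim k V (fun n => ‖x + w n‖) + θ₂ * ultraLim k V (fun n => ‖y + w n‖) := by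
  have habs : ∀ (v : X), ∀ n, |‖v + w n‖| ≤ ‖v‖ + R := fun v n => by
    rw [abs_of_nonneg (norm_nonneg _)]
    exact (norm_add_le _ _).trans (by linarith [hw n])
  have hpt : ∀ n, ‖(θ₁ • x + θ₂ • y) + w n‖ ≤ θ₁ * ‖x + w n‖ + θ₂ * ‖y + w n‖ := by
    intro n
    have hw' : w n = θ₁ • w n + θ₂ • w n := by
      rw [← add_smul, h3, one_smul]
    have heqv : (θ₁ • x + θ₂ • y) + w n = θ₁ • (x + w n) + θ₂ • (y + w n) := by
      rw [smul_add, smul_add]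
      nth_rewrite 1 [hw']
      abel
    calc ‖(θ₁ • x + θ₂ • y) + w n‖ = ‖θ₁ • (x + w n) + θ₂ • (y + w n)‖ := by rw [heqv]
      _ ≤ ‖θ₁ • (x + w n)‖ + ‖θ₂ • (y + w n)‖ := norm_add_le _ _
      _ = θ₁ * ‖x + w n‖ + θ₂ * ‖y + w n‖ := by
          rw [norm_smul, norm_smul, Real.norm_of_nonneg h1, Real.norm_of_nonneg h2]
  have hmono := ultraLim_mono k V _ _ (‖θ₁ • x + θ₂ • y‖ + R)
    (θ₁ * (‖x‖ + R) + θ₂ * (‖y‖ + R)) (habs _)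
    (fun n => by
      have hx := habs x n; have hy := habs y n
      rw [abs_of_nonneg (norm_nonneg _)] at hx hy
      rw [abs_of_nonneg (by positivity : (0:ℝ) ≤ θ₁ * ‖x + w n‖ + θ₂ * ‖y + w n‖)]
      nlinarith [norm_nonneg (x + w n), norm_nonneg (y + w n)])
    hpt
  have heq := ultraLim_linear k V (fun n => ‖x + w n‖) (fun n => ‖y + w n‖)
    (‖x‖ + R) (‖y‖ + R) (habs x) (habs y) θ₁ θ₂
  linarith [hmono, heq.le]

end Norms

section Tree
variable {X : Type*} [NormedAddCommGroup X] [NormedSpace ℝ X]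

lemma treeNorm_abs_le {k : ℕ} (U : Fin k → Ultrafilter ℕ) (u : TreeU X k)
    (hb : ∀ i v, ‖u i v‖ ≤ 1) (x : X) (a : Fin k → ℝ) :
    |treeNorm U u x a| ≤ ‖x‖ + ∑ i : Fin k, |a i| := by
  apply ultraLim_abs_le
  intro n
  rw [abs_of_nonneg (norm_nonneg _)]
  refine (norm_add_le _ _).trans (add_le_add le_rfl ?_)
  refine (norm_sum_le _ _).trans (Finset.sum_le_sum fun i _ => ?_)
  rw [norm_smul, Real.norm_eq_abs]
  calc |a i| * ‖u i _‖ ≤ |a i| * 1 := mul_le_mul_of_nonneg_left (hb _ _) (abs_nonneg _)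
    _ = |a i| := mul_one _

lemma treeNorm_peel {k : ℕ} (U : Fin (k+1) → Ultrafilter ℕ) (u : TreeU X (k+1)) (x : X)
    (c : Fin (k+1) → ℝ) :
    treeNorm U u x c = limUnder (U 0 : Filter ℕ) (fun a₀ => treeNorm (fun i => U i.succ)
      (fun i v => u i.succ (Fin.cons a₀ v) : TreeU X k)
      (x + c 0 • u 0 (fun _ => a₀)) (fun i => c i.succ)) := by
  show ultraLim (k+1) U _ = _
  rw [ultraLim_cons]
  congr 1; funext a₀
  show ultraLim k _ _ = ultraLim k _ _
  congr 1; funext n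
  have hsum : x + ∑ i : Fin (k+1), c i • u i (fun j => (Fin.cons a₀ n : Fin (k+1) → ℕ) (Fin.castLE i.isLt j))
      = (x + c 0 • u 0 (fun _ => a₀)) + ∑ i : Fin k, c i.succ •
        (fun (i : Fin k) (v : Fin (i.1+1) → ℕ) => u i.succ (Fin.cons a₀ v)) i
          (fun j => n (Fin.castLE i.isLt j)) := by
    rw [Fin.sum_univ_succ, ← add_assoc]
    have e0 : u 0 (fun j : Fin 1 => (Fin.cons a₀ n : Fin (k+1) → ℕ)
        (Fin.castLE (0 : Fin (k+1)).isLt j)) = u 0 (fun _ : Fin 1 => a₀) := by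
      congr 1; funext j; obtain ⟨jv, hj⟩ := j
      cases jv with
      | zero => rfl
      | succ jv' => omega
    have es : ∀ i : Fin k, u i.succ (fun j : Fin (i.1+2) => (Fin.cons a₀ n : Fin (k+1) → ℕ)
        (Fin.castLE (i.succ).isLt j))
        = u i.succ (Fin.cons a₀ (fun j : Fin (i.1+1) => n (Fin.castLE i.isLt j))) := by
      intro i; congr 1; funext j; obtain ⟨jv, hj⟩ := j
      cases jv with
      | zero => rfl
      | succ jv' => rfl
    exact congrArg₂ (· + ·) (congrArg (fun z => x + c 0 • z) e0)
      (Finset.sum_congr rfl fun i _ => congrArg (fun z => c i.succ • z) (es i))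
  rw [hsum]

end Tree

section Drop
variable {X : Type*} [NormedAddCommGroup X] [NormedSpace ℝ X]

lemma drop_coeff : ∀ (k : ℕ) (U : Fin k → Ultrafilter ℕ) (u : TreeU X k) (x : X)
    (a : Fin k → ℝ) (q : Fin k),
    (∀ i v, ‖u i v‖ ≤ 1) →
    iterEventually q.1 (fun j => U (Fin.castLE q.isLt.le j))
      (fun pre => ∀ φ : X →L[ℝ] ℝ,
        Tendsto (fun n => φ (u q (Fin.snoc pre n))) (U q : Filter ℕ) (𝓝 0)) →
    (∀ j : Fin k, q < j → a j ≠ 0 → ∀ v w : Fin (j.1+1) → ℕ,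
      (∀ b : Fin (j.1+1), b.1 ≠ q.1 → v b = w b) → u j v = u j w) →
    treeNorm U u x (Function.update a q 0) ≤ treeNorm U u x a
  | 0, _, _, _, _, q, _, _, _ => q.elim0
  | k + 1, U, u, x, a, q, hb, hw, hind => by
    rcases Fin.eq_zero_or_eq_succ q with hq0 | ⟨p, rfl⟩
    · subst hq0
      set V : Fin k → Ultrafilter ℕ := fun i => U i.succ with hV
      set u0 : TreeU X k := fun i v => u i.succ (Fin.cons 0 v) with hu0
      set ta : Fin k → ℝ := fun i => a i.succ with hta
      set R : ℝ := ∑ i : Fin k, |ta i| with hR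
      -- replacing the first coordinate does not change inner treeNorms
      have treq : ∀ (a₀ : ℕ) (y : X),
          treeNorm V (fun i v => u i.succ (Fin.cons a₀ v) : TreeU X k) y ta
            = treeNorm V u0 y ta := by
        intro a₀ y
        show ultraLim k V _ = ultraLim k V _
        congr 1; funext n
        refine congrArg (fun z => ‖y + z‖) (Finset.sum_congr rfl fun i _ => ?_)
        by_cases hia : ta i = 0
        · rw [hia, zero_smul, zero_smul]
        · refine congrArg (fun z => ta i • z) ?_
          refine hind i.succ (Fin.succ_pos i) hia _ _ fun b hb => ?_
          obtain ⟨bv, hbv⟩ := b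
          cases bv with
          | zero => exact absurd rfl hb
          | succ bv' => rfl
      have hbound : ∀ (a₀ : ℕ) (y : X) (c : Fin k → ℝ),
          |treeNorm V (fun i v => u i.succ (Fin.cons a₀ v) : TreeU X k) y c|
            ≤ ‖y‖ + ∑ i : Fin k, |c i| :=
        fun a₀ y c => treeNorm_abs_le V _ (fun i v => hb i.succ _) y c
      -- weak nullity of the first level
      have hz : ∀ φ : X →L[ℝ] ℝ,
          Tendsto (fun a₀ : ℕ => φ (u 0 (fun _ : Fin 1 => a₀))) (U 0 : Filter ℕ) (𝓝 0) := by
        intro φ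
        have h1 := hw φ
        refine h1.congr fun a₀ => ?_
        refine congrArg (fun z => φ (u 0 z)) ?_
        funext i
        have : i = 0 := Fin.ext (Nat.lt_one_iff.mp i.isLt)
        subst this; rfl
      set N : X → ℝ := fun y => treeNorm V u0 y ta with hN
      set Ψ : X → ℝ := fun v => N (x + a 0 • v) with hΨ
      set z : ℕ → X := fun a₀ => u 0 (fun _ : Fin 1 => a₀) with hz'
      set w : (Fin k → ℕ) → X :=
        fun n => ∑ i : Fin k, ta i • u0 i (fun j => n (Fin.castLE i.isLt j)) with hww
      have hwR : ∀ n, ‖w n‖ ≤ R := by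
        intro n
        refine (norm_sum_le _ _).trans ?_
        refine Finset.sum_le_sum fun i _ => ?_
        rw [norm_smul, Real.norm_eq_abs]
        calc |ta i| * ‖u0 i _‖ ≤ |ta i| * 1 :=
              mul_le_mul_of_nonneg_left (hb i.succ _) (abs_nonneg _)
          _ = |ta i| := mul_one _
      have hNdef : ∀ y, N y = ultraLim k V (fun n => ‖y + w n‖) := fun y => rfl
      -- convexity and Lipschitz continuity of Ψ
      have hconv : ConvexOn ℝ Set.univ Ψ := by
        refine ⟨convex_univ, fun p _ q' _ θ₁ θ₂ h1 h2 h3 => ?_⟩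
        have hx3 : θ₁ • x + θ₂ • x = x := by rw [← add_smul, h3, one_smul]
        have key : x + a 0 • (θ₁ • p + θ₂ • q')
            = θ₁ • (x + a 0 • p) + θ₂ • (x + a 0 • q') := by
          rw [smul_add, smul_add, smul_add, smul_comm (a 0) θ₁, smul_comm (a 0) θ₂]
          nth_rewrite 1 [← hx3]
          abel
        show Ψ (θ₁ • p + θ₂ • q') ≤ θ₁ • Ψ p + θ₂ • Ψ q'
        simp only [hΨ]
        rw [key]
        simp only [hNdef, smul_eq_mul]
        exact ultraNorm_convex V w R hwR _ _ θ₁ θ₂ h1 h2 h3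
      have hlip : ∀ p q' : X, Ψ p ≤ Ψ q' + |a 0| * ‖p - q'‖ := by
        intro p q'
        simp only [hΨ, hNdef]
        have h1 := ultraNorm_le_add V w R hwR (x + a 0 • p) (x + a 0 • q')
        have h2 : ‖x + a 0 • p - (x + a 0 • q')‖ = |a 0| * ‖p - q'‖ := by
          rw [show x + a 0 • p - (x + a 0 • q') = a 0 • (p - q') by
            rw [smul_sub]; abel]
          rw [norm_smul, Real.norm_eq_abs]
        rw [h2] at h1
        exact h1
      -- LHS equals N x
      have hLHS : treeNorm U u x (Function.update a 0 0) = N x := by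
        rw [treeNorm_peel]
        have : (fun a₀ : ℕ => treeNorm (fun i => U i.succ)
            (fun i v => u i.succ (Fin.cons a₀ v) : TreeU X k)
            (x + Function.update a 0 0 0 • u 0 (fun _ => a₀))
            (fun i => Function.update a 0 0 i.succ)) = fun _ : ℕ => N x := by
          funext a₀
          rw [Function.update_self, zero_smul, add_zero]
          have hcoef : (fun i : Fin k => Function.update a 0 0 i.succ) = ta :=
            funext fun i => Function.update_of_ne (Fin.succ_ne_zero i) 0 a
          rw [hcoef]
          exact treq a₀ x
        rw [this, limUnder_const']
      -- RHS
      have hRHS : treeNorm U u x a = limUnder (U 0 : Filter ℕ) (fun a₀ => Ψ (z a₀)) := by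
        rw [treeNorm_peel]
        congr 1; funext a₀
        exact treq a₀ _
      rw [hLHS, hRHS]
      set L := limUnder (U 0 : Filter ℕ) (fun a₀ => Ψ (z a₀)) with hL
      have hfb : ∀ a₀ : ℕ, |Ψ (z a₀)| ≤ ‖x‖ + |a 0| + R := by
        intro a₀
        have h1 : |Ψ (z a₀)| ≤ ‖x + a 0 • z a₀‖ + R := by
          have := treeNorm_abs_le V u0 (fun i v => hb i.succ _) (x + a 0 • z a₀) ta
          exact this
        refine h1.trans ?_
        have h2 : ‖x + a 0 • z a₀‖ ≤ ‖x‖ + |a 0| := by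
          refine (norm_add_le _ _).trans ?_
          rw [norm_smul, Real.norm_eq_abs]
          have : ‖z a₀‖ ≤ 1 := hb 0 _
          nlinarith [abs_nonneg (a 0)]
        linarith
      refine le_of_forall_pos_le_add fun ε hε => ?_
      have htd := bddTendsto (U := U 0) hfb
      have hev : ∀ᶠ a₀ in (U 0 : Filter ℕ), Ψ (z a₀) ≤ L + ε :=
        (htd.eventually_lt_const (lt_add_of_pos_right L hε)).mono fun a₀ h => h.le
      have hm := mazur z hz Ψ hconv |a 0| (abs_nonneg _) hlip (L + ε) hev
      have hΨ0 : Ψ 0 = N x := by simp only [hΨ, smul_zero, add_zero]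
      rw [hΨ0] at hm
      exact hm
    · -- q = p.succ
      set V : Fin k → Ultrafilter ℕ := fun i => U i.succ with hV
      set ta : Fin k → ℝ := fun i => a i.succ with hta
      -- peel both sides
      rw [treeNorm_peel, treeNorm_peel]
      have hc0 : Function.update a p.succ 0 0 = a 0 :=
        Function.update_of_ne (Fin.succ_ne_zero p).symm 0 a
      have hcoef : (fun i : Fin k => Function.update a p.succ 0 i.succ)
          = Function.update ta p 0 := by
        funext i
        by_cases hip : i = p
        · subst hip
          rw [Function.update_self, Function.update_self]
        · rw [Function.update_of_ne (fun hcon => hip (Fin.succ_injective _ hcon)) 0 a,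
            Function.update_of_ne hip 0 ta]
      rw [hc0, hcoef]
      -- the eventual weak-null hypothesis for the shifted tree
      have hwc := (iterEventually_cons p.1
        (fun j : Fin (p.1+1) => U (Fin.castLE (Fin.succ p).isLt.le j)) _).mp hw
      have hcast0 : Fin.castLE (Fin.succ p).isLt.le (0 : Fin (p.1+1)) = (0 : Fin (k+1)) :=
        Fin.ext rfl
      rw [hcast0] at hwc
      have hfam : (fun i : Fin p.1 => U (Fin.castLE (Fin.succ p).isLt.le i.succ))
          = fun i : Fin p.1 => V (Fin.castLE p.isLt.le i) :=
        funext fun i => congrArg U (Fin.ext rfl)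
      -- the eventual pointwise inequality
      have hevle : ∀ᶠ a₀ in (U 0 : Filter ℕ),
          treeNorm V (fun i v => u i.succ (Fin.cons a₀ v) : TreeU X k)
            (x + a 0 • u 0 (fun _ => a₀)) (Function.update ta p 0)
          ≤ treeNorm V (fun i v => u i.succ (Fin.cons a₀ v) : TreeU X k)
            (x + a 0 • u 0 (fun _ => a₀)) ta := by
        refine hwc.mono fun a₀ hwa => ?_
        refine drop_coeff k V (fun i v => u i.succ (Fin.cons a₀ v)) _ ta p
          (fun i v => hb i.succ _) ?_ ?_
        · -- weak nullity at level p for the shifted tree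
          rw [hfam] at hwa
          refine iterEventually_mono p.1 _ _ _ (fun pre hpre φ => ?_) hwa
          have h2 := hpre φ
          have harg : ∀ n : ℕ,
              u (Fin.succ p) (Fin.snoc (Fin.cons a₀ pre) n)
                = u p.succ (Fin.cons a₀ (Fin.snoc pre n)) := by
            intro n; rw [snoc_cons_comm]
          have hUq : U (Fin.succ p) = V p := rfl
          rw [hUq] at h2
          exact h2.congr fun n => congrArg φ (harg n)
        · -- independence hypothesis for the shifted tree
          intro j hpj haj v w' hvw
          refine hind j.succ (by rwa [Fin.succ_lt_succ_iff]) haj _ _ fun b hb' => ?_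
          obtain ⟨bv, hbv⟩ := b
          cases bv with
          | zero => rfl
          | succ bv' =>
            have hne : bv' ≠ p.1 := fun hcon => hb' (by simp [hcon])
            have hlt : bv' < j.1 + 1 := by
              have := hbv
              simp only [Fin.val_succ] at this
              omega
            exact hvw ⟨bv', hlt⟩ hne
      -- bounded functions, so limUnder is monotone
      refine limUnder_mono (Rf := ‖x‖ + |a 0| + ∑ i : Fin k, |ta i|)
        (Rg := ‖x‖ + |a 0| + ∑ i : Fin k, |ta i|) ?_ ?_ hevle
      · intro a₀
        have h1 := treeNorm_abs_le V (fun i v => u i.succ (Fin.cons a₀ v) : TreeU X k)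
          (fun i v => hb i.succ _) (x + a 0 • u 0 (fun _ => a₀)) (Function.update ta p 0)
        refine h1.trans ?_
        have h2 : ‖x + a 0 • u 0 (fun _ => a₀)‖ ≤ ‖x‖ + |a 0| := by
          refine (norm_add_le _ _).trans ?_
          rw [norm_smul, Real.norm_eq_abs]
          nlinarith [hb 0 (fun _ => a₀), abs_nonneg (a 0)]
        have h3 : ∑ i : Fin k, |Function.update ta p 0 i| ≤ ∑ i : Fin k, |ta i| := by
          refine Finset.sum_le_sum fun i _ => ?_
          by_cases hip : i = p
          · subst hip; rw [Function.update_self]; simp [abs_nonneg]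
          · rw [Function.update_of_ne hip]
        linarith
      · intro a₀
        have h1 := treeNorm_abs_le V (fun i v => u i.succ (Fin.cons a₀ v) : TreeU X k)
          (fun i v => hb i.succ _) (x + a 0 • u 0 (fun _ => a₀)) ta
        refine h1.trans ?_
        have h2 : ‖x + a 0 • u 0 (fun _ => a₀)‖ ≤ ‖x‖ + |a 0| := by
          refine (norm_add_le _ _).trans ?_
          rw [norm_smul, Real.norm_eq_abs]
          nlinarith [hb 0 (fun _ => a₀), abs_nonneg (a 0)]
        linarith
end Drop

lemma rankIn_emb {k c : ℕ} (S : Finset (Fin k)) (h : S.card = c) (b : Fin c) :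
    rankIn S (S.orderEmbOfFin h b) = b.1 + 1 := by
  rw [rankIn]
  have hset : S.filter (fun i => i ≤ S.orderEmbOfFin h b)
      = (Finset.Iic b).map (S.orderEmbOfFin h).toEmbedding := by
    ext x
    simp only [Finset.mem_filter, Finset.mem_map, Finset.mem_Iic,
      RelEmbedding.coe_toEmbedding]
    constructor
    · rintro ⟨hxS, hxle⟩
      have : x ∈ Set.range (S.orderEmbOfFin h) := by
        rw [Finset.range_orderEmbOfFin]; exact hxS
      obtain ⟨i, rfl⟩ := this
      exact ⟨i, (OrderEmbedding.le_iff_le _).1 hxle, rfl⟩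
    · rintro ⟨i, hib, rfl⟩
      exact ⟨S.orderEmbOfFin_mem h i, (OrderEmbedding.le_iff_le _).2 hib⟩
  rw [hset, Finset.card_map, Fin.card_Iic]

lemma emb_rankIn {k c : ℕ} (S : Finset (Fin k)) (h : S.card = c) (j : Fin k) (hj : j ∈ S)
    (pf : rankIn S j - 1 < c) :
    S.orderEmbOfFin h ⟨rankIn S j - 1, pf⟩ = j := by
  have : j ∈ Set.range (S.orderEmbOfFin h) := by
    rw [Finset.range_orderEmbOfFin]; exact hj
  obtain ⟨b, rfl⟩ := this
  congr 1
  refine Fin.ext ?_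
  show rankIn S (S.orderEmbOfFin h b) - 1 = b.1
  rw [rankIn_emb]; omega

section Inter
variable {X : Type*} [NormedAddCommGroup X] [NormedSpace ℝ X]
variable {l m : ℕ} (P : Finset (Fin (l + m))) (hP : P.card = l)
  (s : TreeU X l) (t : TreeU X m)

lemma intertwine_norm (hs : ∀ i v, ‖s i v‖ = 1) (ht : ∀ i v, ‖t i v‖ = 1) :
    ∀ j v, ‖intertwine P hP s t j v‖ ≤ 1 := by
  intro j v
  rw [intertwine]
  split_ifs with hj
  · exact le_of_eq (hs _ _)
  · exact le_of_eq (ht _ _)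

lemma intertwine_indep_s (j : Fin (l + m)) (hj : j ∈ P) (q : Fin (l + m)) (hq : q ∉ P)
    (v w : Fin (j.1 + 1) → ℕ) (h : ∀ b : Fin (j.1 + 1), b.1 ≠ q.1 → v b = w b) :
    intertwine P hP s t j v = intertwine P hP s t j w := by
  rw [intertwine, intertwine, dif_pos hj, dif_pos hj]
  congr 1
  funext b
  by_cases hlt : (P.orderEmbOfFin hP ⟨b.1, by
      have h1 : 0 < rankIn P j :=
        Finset.card_pos.mpr ⟨j, Finset.mem_filter.mpr ⟨hj, le_refl j⟩⟩
      have h2 : rankIn P j ≤ l := (Finset.card_filter_le P _).trans hP.le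
      have h3 := b.isLt
      omega⟩).1 < j.1 + 1
  · simp only [dif_pos hlt]
    refine h _ fun hcon => hq ?_
    have heq : P.orderEmbOfFin hP ⟨b.1, _⟩ = q := Fin.ext hcon
    rw [← heq]
    exact P.orderEmbOfFin_mem hP _
  · simp only [dif_neg hlt]

lemma intertwine_indep_t (j : Fin (l + m)) (hj : j ∉ P) (q : Fin (l + m)) (hq : q ∈ P)
    (v w : Fin (j.1 + 1) → ℕ) (h : ∀ b : Fin (j.1 + 1), b.1 ≠ q.1 → v b = w b) :
    intertwine P hP s t j v = intertwine P hP s t j w := by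
  rw [intertwine, intertwine, dif_neg hj, dif_neg hj]
  congr 1
  funext b
  by_cases hlt : ((Pᶜ.orderEmbOfFin (compl_card P hP)) ⟨b.1, by
      have h1 : 0 < rankIn Pᶜ j :=
        Finset.card_pos.mpr ⟨j, Finset.mem_filter.mpr ⟨Finset.mem_compl.mpr hj, le_refl j⟩⟩
      have h2 : rankIn Pᶜ j ≤ m := (Finset.card_filter_le Pᶜ _).trans (compl_card P hP).le
      have h3 := b.isLt
      omega⟩).1 < j.1 + 1
  · simp only [dif_pos hlt]
    refine h _ fun hcon => ?_
    have heq : Pᶜ.orderEmbOfFin (compl_card P hP) ⟨b.1, _⟩ = q := Fin.ext hcon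
    have : q ∈ Pᶜ := by rw [← heq]; exact Pᶜ.orderEmbOfFin_mem (compl_card P hP) _
    exact (Finset.mem_compl.1 this) hq
  · simp only [dif_neg hlt]

end Inter

section WNull
variable {X : Type*} [NormedAddCommGroup X] [NormedSpace ℝ X]
variable {l m : ℕ} (P : Finset (Fin (l + m))) (hP : P.card = l)
  (s : TreeU X l) (t : TreeU X m) (U : Fin (l + m) → Ultrafilter ℕ)

lemma intertwine_wnull_t
    (hwt : WeaklyNullU (fun j => U (Pᶜ.orderEmbOfFin (compl_card P hP) j)) t)
    (q : Fin (l + m)) (hq : q ∉ P) :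
    iterEventually q.1 (fun b => U (Fin.castLE q.isLt.le b))
      (fun pre => ∀ φ : X →L[ℝ] ℝ,
        Tendsto (fun n => φ (intertwine P hP s t q (Fin.snoc pre n)))
          (U q : Filter ℕ) (𝓝 0)) := by
  have hc := compl_card P hP
  set emb := Pᶜ.orderEmbOfFin hc with hemb
  have hqc : q ∈ Pᶜ := Finset.mem_compl.mpr hq
  have h1 : 0 < rankIn Pᶜ q :=
    Finset.card_pos.mpr ⟨q, Finset.mem_filter.mpr ⟨hqc, le_refl q⟩⟩
  have h2 : rankIn Pᶜ q ≤ m := (Finset.card_filter_le Pᶜ _).trans hc.le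
  set r : Fin m := ⟨rankIn Pᶜ q - 1, by omega⟩ with hr
  have hembr : emb r = q := emb_rankIn Pᶜ hc q hqc _
  have hltq : ∀ b : Fin (r.1+1), (emb (Fin.castLE r.isLt b)).1 < q.1 + 1 := by
    intro b
    have hble : Fin.castLE r.isLt b ≤ r := by
      rw [Fin.le_def]
      exact Nat.lt_succ_iff.mp b.isLt
    have := emb.monotone hble
    rw [hembr] at this
    exact Nat.lt_succ_iff.mpr this
  -- evaluation of the intertwining at a level in the complement of P
  have hEV : ∀ v : Fin (q.1+1) → ℕ, intertwine P hP s t q v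
      = t r (fun b : Fin (r.1+1) => v ⟨(emb (Fin.castLE r.isLt b)).1, hltq b⟩) := by
    intro v
    rw [intertwine, dif_neg hq]
    show t r _ = t r _
    congr 1
    funext b
    beta_reduce
    split_ifs with hg
    · exact congrArg v (Fin.ext rfl)
    · exact absurd (hltq b) hg
  -- the coordinate embedding
  have hepf : ∀ b : Fin r.1, (emb (Fin.castLE r.isLt.le b)).1 < q.1 := by
    intro b
    have hblt : Fin.castLE r.isLt.le b < r := b.isLt
    have := emb.strictMono hblt
    rw [hembr] at this
    exact this
  set e : Fin r.1 → Fin q.1 := fun b => ⟨(emb (Fin.castLE r.isLt.le b)).1, hepf b⟩ with he'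
  have he : StrictMono e := by
    intro i j hij
    show (emb (Fin.castLE r.isLt.le i)).1 < (emb (Fin.castLE r.isLt.le j)).1
    exact emb.strictMono (show Fin.castLE r.isLt.le i < Fin.castLE r.isLt.le j from hij)
  have hsub : iterEventually r.1
      (fun b => (fun i : Fin q.1 => U (Fin.castLE q.isLt.le i)) (e b))
      (fun pre => ∀ φ : X →L[ℝ] ℝ,
        Tendsto (fun a : ℕ => φ (t r (Fin.snoc pre a))) (U q : Filter ℕ) (𝓝 0)) := by
    have h3 := hwt r
    simp only [hembr] at h3
    have hfam : (fun b : Fin r.1 => U (emb (Fin.castLE r.isLt.le b)))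
        = fun b : Fin r.1 => U (Fin.castLE q.isLt.le (e b)) :=
      funext fun b => congrArg U (Fin.ext rfl)
    rw [hfam] at h3
    exact h3
  have key := iterEventually_sub q.1 r.1 e he (fun i => U (Fin.castLE q.isLt.le i)) _ hsub
  refine iterEventually_mono q.1 _ _ _ (fun n hn φ => ?_) key
  refine (hn φ).congr fun a => congrArg φ ?_
  rw [hEV (Fin.snoc n a)]
  refine congrArg (t r) ?_
  funext b
  refine Fin.lastCases ?_ (fun b' => ?_) b
  · have hco : (⟨(emb (Fin.castLE r.isLt (Fin.last r.1))).1, hltq _⟩ : Fin (q.1+1))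
        = Fin.last q.1 := by
      refine Fin.ext ?_
      show (emb (Fin.castLE r.isLt (Fin.last r.1))).1 = q.1
      have : Fin.castLE r.isLt (Fin.last r.1) = r := Fin.ext rfl
      rw [this, hembr]
    rw [Fin.snoc_last, hco, Fin.snoc_last]
  · have hco : (⟨(emb (Fin.castLE r.isLt (Fin.castSucc b'))).1, hltq _⟩ : Fin (q.1+1))
        = Fin.castSucc (e b') := Fin.ext rfl
    rw [Fin.snoc_castSucc, hco, Fin.snoc_castSucc]

lemma intertwine_wnull_s
    (hws : WeaklyNullU (fun j => U (P.orderEmbOfFin hP j)) s)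
    (q : Fin (l + m)) (hq : q ∈ P) :
    iterEventually q.1 (fun b => U (Fin.castLE q.isLt.le b))
      (fun pre => ∀ φ : X →L[ℝ] ℝ,
        Tendsto (fun n => φ (intertwine P hP s t q (Fin.snoc pre n)))
          (U q : Filter ℕ) (𝓝 0)) := by
  set emb := P.orderEmbOfFin hP with hemb
  have h1 : 0 < rankIn P q :=
    Finset.card_pos.mpr ⟨q, Finset.mem_filter.mpr ⟨hq, le_refl q⟩⟩
  have h2 : rankIn P q ≤ l := (Finset.card_filter_le P _).trans hP.le
  set r : Fin l := ⟨rankIn P q - 1, by omega⟩ with hr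
  have hembr : emb r = q := emb_rankIn P hP q hq _
  have hltq : ∀ b : Fin (r.1+1), (emb (Fin.castLE r.isLt b)).1 < q.1 + 1 := by
    intro b
    have hble : Fin.castLE r.isLt b ≤ r := by
      rw [Fin.le_def]
      exact Nat.lt_succ_iff.mp b.isLt
    have := emb.monotone hble
    rw [hembr] at this
    exact Nat.lt_succ_iff.mpr this
  -- evaluation of the intertwining at a level in the complement of P
  have hEV : ∀ v : Fin (q.1+1) → ℕ, intertwine P hP s t q v
      = s r (fun b : Fin (r.1+1) => v ⟨(emb (Fin.castLE r.isLt b)).1, hltq b⟩) := by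
    intro v
    rw [intertwine, dif_pos hq]
    show s r _ = s r _
    congr 1
    funext b
    beta_reduce
    split_ifs with hg
    · exact congrArg v (Fin.ext rfl)
    · exact absurd (hltq b) hg
  -- the coordinate embedding
  have hepf : ∀ b : Fin r.1, (emb (Fin.castLE r.isLt.le b)).1 < q.1 := by
    intro b
    have hblt : Fin.castLE r.isLt.le b < r := b.isLt
    have := emb.strictMono hblt
    rw [hembr] at this
    exact this
  set e : Fin r.1 → Fin q.1 := fun b => ⟨(emb (Fin.castLE r.isLt.le b)).1, hepf b⟩ with he'
  have he : StrictMono e := by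
    intro i j hij
    show (emb (Fin.castLE r.isLt.le i)).1 < (emb (Fin.castLE r.isLt.le j)).1
    exact emb.strictMono (show Fin.castLE r.isLt.le i < Fin.castLE r.isLt.le j from hij)
  have hsub : iterEventually r.1
      (fun b => (fun i : Fin q.1 => U (Fin.castLE q.isLt.le i)) (e b))
      (fun pre => ∀ φ : X →L[ℝ] ℝ,
        Tendsto (fun a : ℕ => φ (s r (Fin.snoc pre a))) (U q : Filter ℕ) (𝓝 0)) := by
    have h3 := hws r
    simp only [hembr] at h3
    have hfam : (fun b : Fin r.1 => U (emb (Fin.castLE r.isLt.le b)))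
        = fun b : Fin r.1 => U (Fin.castLE q.isLt.le (e b)) :=
      funext fun b => congrArg U (Fin.ext rfl)
    rw [hfam] at h3
    exact h3
  have key := iterEventually_sub q.1 r.1 e he (fun i => U (Fin.castLE q.isLt.le i)) _ hsub
  refine iterEventually_mono q.1 _ _ _ (fun n hn φ => ?_) key
  refine (hn φ).congr fun a => congrArg φ ?_
  rw [hEV (Fin.snoc n a)]
  refine congrArg (s r) ?_
  funext b
  refine Fin.lastCases ?_ (fun b' => ?_) b
  · have hco : (⟨(emb (Fin.castLE r.isLt (Fin.last r.1))).1, hltq _⟩ : Fin (q.1+1))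
        = Fin.last q.1 := by
      refine Fin.ext ?_
      show (emb (Fin.castLE r.isLt (Fin.last r.1))).1 = q.1
      have : Fin.castLE r.isLt (Fin.last r.1) = r := Fin.ext rfl
      rw [this, hembr]
    rw [Fin.snoc_last, hco, Fin.snoc_last]
  · have hco : (⟨(emb (Fin.castLE r.isLt (Fin.castSucc b'))).1, hltq _⟩ : Fin (q.1+1))
        = Fin.castSucc (e b') := Fin.ext rfl
    rw [Fin.snoc_castSucc, hco, Fin.snoc_castSucc]


end WNull

section Main
variable {X : Type*} [NormedAddCommGroup X] [NormedSpace ℝ X]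

lemma drop_side {k : ℕ} (U : Fin k → Ultrafilter ℕ) (u : TreeU X k)
    (hb : ∀ i v, ‖u i v‖ ≤ 1) (S : Finset (Fin k))
    (hwS : ∀ q ∈ S, iterEventually q.1 (fun b => U (Fin.castLE q.isLt.le b))
      (fun pre => ∀ φ : X →L[ℝ] ℝ,
        Tendsto (fun n => φ (u q (Fin.snoc pre n))) (U q : Filter ℕ) (𝓝 0)))
    (hiS : ∀ q ∈ S, ∀ j : Fin k, q < j → j ∉ S → ∀ v w : Fin (j.1+1) → ℕ,
      (∀ b : Fin (j.1+1), b.1 ≠ q.1 → v b = w b) → u j v = u j w)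
    (x : X) (a : Fin k → ℝ) :
    treeNorm U u x (fun i => if i ∈ S then 0 else a i) ≤ treeNorm U u x a := by
  set c : ℕ → Fin k → ℝ := fun n i => if i ∈ S ∧ n ≤ i.1 then 0 else a i with hc
  have hstep : ∀ n, treeNorm U u x (c n) ≤ treeNorm U u x (c (n+1)) := by
    intro n
    by_cases hn : n < k
    · set q : Fin k := ⟨n, hn⟩ with hqdef
      by_cases hqS : q ∈ S
      · have hupd : c n = Function.update (c (n+1)) q 0 := by
          funext i
          by_cases hiq : i = q
          · subst hiq
            rw [Function.update_self]
            simp only [hc]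
            rw [if_pos ⟨hqS, le_refl n⟩]
          · rw [Function.update_of_ne hiq]
            simp only [hc]
            have hne : i.1 ≠ n := fun hcon => hiq (Fin.ext hcon)
            have hiff : (i ∈ S ∧ n ≤ i.1) ↔ (i ∈ S ∧ n + 1 ≤ i.1) := by
              constructor
              · rintro ⟨h1, h2⟩; exact ⟨h1, by omega⟩
              · rintro ⟨h1, h2⟩; exact ⟨h1, by omega⟩
            rw [if_congr hiff rfl rfl]
        rw [hupd]
        refine drop_coeff k U u x (c (n+1)) q hb (hwS q hqS) ?_
        intro j hqj haj v w hvw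
        have hjS : j ∉ S := by
          intro hjS
          refine haj ?_
          simp only [hc]
          have hqj' : n < j.1 := hqj
          rw [if_pos ⟨hjS, by omega⟩]
        exact hiS q hqS j hqj hjS v w hvw
      · have heq : c n = c (n+1) := by
          funext i
          simp only [hc]
          have hiff : (i ∈ S ∧ n ≤ i.1) ↔ (i ∈ S ∧ n + 1 ≤ i.1) := by
            constructor
            · rintro ⟨h1, h2⟩
              refine ⟨h1, ?_⟩
              have hne : i.1 ≠ n := by
                intro hcon
                refine hqS ?_
                rw [show q = i from Fin.ext hcon.symm]
                exact h1
              omega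
            · rintro ⟨h1, h2⟩; exact ⟨h1, by omega⟩
          rw [if_congr hiff rfl rfl]
        rw [heq]
    · have heq : c n = c (n+1) := by
        funext i
        simp only [hc]
        have hiff : (i ∈ S ∧ n ≤ i.1) ↔ (i ∈ S ∧ n + 1 ≤ i.1) := by
          constructor
          · rintro ⟨h1, h2⟩
            exact absurd i.isLt (by omega)
          · rintro ⟨h1, h2⟩
            exact absurd i.isLt (by omega)
        rw [if_congr hiff rfl rfl]
      rw [heq]
  have hchain : ∀ n, treeNorm U u x (c 0) ≤ treeNorm U u x (c n) := by
    intro n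
    induction n with
    | zero => exact le_rfl
    | succ n ih => exact ih.trans (hstep n)
  have h0 : (fun i => if i ∈ S then 0 else a i) = c 0 := by
    funext i
    simp only [hc]
    have hiff : (i ∈ S) ↔ (i ∈ S ∧ 0 ≤ i.1) :=
      ⟨fun h => ⟨h, Nat.zero_le _⟩, fun h => h.1⟩
    rw [if_congr hiff rfl rfl]
  have hk : a = c k := by
    funext i
    simp only [hc]
    rw [if_neg (fun h => absurd i.isLt (by omega))]
  rw [h0, hk]
  exact hchain k

end Main



/-- The intertwining projection inequalities: for the `P`-intertwining `u = s ⊛_P t` of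
weakly null normalized trees, restricting coefficients to `P` or to `P^c` does not increase
`N_u^{Ū}`. -/
theorem stmt14 (X : Type*) [NormedAddCommGroup X] [NormedSpace ℝ X] [CompleteSpace X]
    (hrefl : Function.Surjective (NormedSpace.inclusionInDoubleDual ℝ X))
    (l m : ℕ) (P : Finset (Fin (l + m))) (hP : P.card = l)
    (U : Fin (l + m) → Ultrafilter ℕ) (hU : ∀ i, FreeUF (U i))
    (s : TreeU X l) (t : TreeU X m) (hs : NormalizedU s) (ht : NormalizedU t)
    (hws : WeaklyNullU (fun i => U (P.orderEmbOfFin hP i)) s)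
    (hwt : WeaklyNullU (fun j => U (Pᶜ.orderEmbOfFin (compl_card P hP) j)) t) :
    ∀ a : Fin (l + m) → ℝ,
      treeNorm U (intertwine P hP s t) 0 (fun i => if i ∈ P then a i else 0) ≤
        treeNorm U (intertwine P hP s t) 0 a ∧
      treeNorm U (intertwine P hP s t) 0 (fun i => if i ∈ P then 0 else a i) ≤
        treeNorm U (intertwine P hP s t) 0 a := by
  intro a
  have hb := intertwine_norm P hP s t hs ht
  constructor
  · have h := drop_side U (intertwine P hP s t) hb Pᶜ
      (fun q hq => intertwine_wnull_t P hP s t U hwt q (Finset.mem_compl.1 hq))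
      (fun q hq j _ hjS v w hvw =>
        intertwine_indep_s P hP s t j (by simpa using hjS) q (Finset.mem_compl.1 hq) v w hvw)
      0 a
    have hco : (fun i => if i ∈ Pᶜ then (0:ℝ) else a i)
        = fun i => if i ∈ P then a i else 0 := by
      funext i
      by_cases hi : i ∈ P
      · rw [if_pos hi, if_neg (fun hcon => (Finset.mem_compl.1 hcon) hi)]
      · rw [if_neg hi, if_pos (Finset.mem_compl.2 hi)]
    rwa [hco] at h
  · exact drop_side U (intertwine P hP s t) hb P
      (fun q hq => intertwine_wnull_s P hP s t U hws q hq)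
      (fun q hq j _ hjS v w hvw =>
        intertwine_indep_t P hP s t j hjS q hq v w hvw)
      0 a
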